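/- Let G be a finite p-group and let N_k (k ≥ 2^d) be the filtration of G^(d) given by N_{2^d} = G^(d) and N_{k+1} = [N_k, G]. If N_{k-1}/N_k is elementary abelian for some k ≥ 2^d + 1, then N_k/N_{k+1} is elementary abelian. -/

import Mathlib

open scoped commutatorElement

/-- If the commutator `⁅x, y⁆` is central, then `⁅x ^ n, y⁆ = ⁅x, y⁆ ^ n`. -/
lemma commutator_pow_left_of_central {Q : Type*} [Group Q] (x y : Q)
    (hc : ∀ z : Q, Commute ⁅x, y⁆ z) (n : ℕ) : ⁅x ^ n, y⁆ = ⁅x, y⁆ ^ n := by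
  have key : ∀ m : ℕ, x ^ m * y = ⁅x, y⁆ ^ m * (y * x ^ m) := by
    intro m
    induction m with
    | zero => simp
    | succ m ih =>
      have hxy : x * y = ⁅x, y⁆ * (y * x) := by
        rw [commutatorElement_def]; group
      calc x ^ (m + 1) * y = x * (x ^ m * y) := by rw [pow_succ']; group
        _ = x * (⁅x, y⁆ ^ m * (y * x ^ m)) := by rw [ih]
        _ = (x * ⁅x, y⁆ ^ m) * (y * x ^ m) := by group
        _ = (⁅x, y⁆ ^ m * x) * (y * x ^ m) := by rw [← ((hc x).pow_left m).eq]
        _ = ⁅x, y⁆ ^ m * ((x * y) * x ^ m) := by group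
        _ = ⁅x, y⁆ ^ m * ((⁅x, y⁆ * (y * x)) * x ^ m) := by rw [hxy]
        _ = ⁅x, y⁆ ^ (m + 1) * (y * x ^ (m + 1)) := by rw [pow_succ, pow_succ']; group
  rw [commutatorElement_def, key n]
  group

theorem elementary_abelian_quotient_step
    {p : ℕ} [Fact p.Prime] {G : Type*} [Group G] [Finite G]
    (hG : IsPGroup p G) (d : ℕ)
    (N : ℕ → Subgroup G)
    (hN0 : N (2 ^ d) = derivedSeries G d)
    (hNsucc : ∀ j, 2 ^ d ≤ j → N (j + 1) = ⁅N j, (⊤ : Subgroup G)⁆)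
    (k : ℕ) (hk : 2 ^ d + 1 ≤ k)
    (habel : ⁅N (k - 1), N (k - 1)⁆ ≤ N k)
    (hexp : ∀ x ∈ N (k - 1), x ^ p ∈ N k) :
    ⁅N k, N k⁆ ≤ N (k + 1) ∧ ∀ x ∈ N k, x ^ p ∈ N (k + 1) := by
  -- every term of the filtration (from 2^d on) is normal
  have hNormal : ∀ m, 2 ^ d ≤ m → (N m).Normal := by
    intro m hm
    induction m, hm using Nat.le_induction with
    | base => rw [hN0]; exact derivedSeries_normal G d
    | succ m hm ih =>
      rw [hNsucc m hm]
      exact @Subgroup.commutator_normal G _ (N m) ⊤ ih inferInstance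
  have hdk : 2 ^ d ≤ k := le_trans (Nat.le_succ _) hk
  have hk1 : 2 ^ d ≤ k - 1 := Nat.le_sub_one_of_lt hk
  have hKdef : N k = ⁅N (k - 1), (⊤ : Subgroup G)⁆ := by
    have := hNsucc (k - 1) hk1
    rwa [Nat.sub_add_cancel (le_trans (Nat.le_add_left 1 (2 ^ d)) hk)] at this
  have hLdef : N (k + 1) = ⁅N k, (⊤ : Subgroup G)⁆ := hNsucc k hdk
  haveI hLn : (N (k + 1)).Normal := hNormal (k + 1) (hdk.trans (Nat.le_succ k))
  refine ⟨?_, ?_⟩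
  · rw [hLdef]
    exact Subgroup.commutator_mono le_rfl le_top
  · -- work in the quotient by N (k+1)
    let f : G →* G ⧸ N (k + 1) := QuotientGroup.mk' (N (k + 1))
    have hone : ∀ z ∈ N (k + 1), f z = 1 := fun z hz => (QuotientGroup.eq_one_iff z).mpr hz
    have hsurj : Function.Surjective f := QuotientGroup.mk'_surjective (N (k + 1))
    -- image of N k is central in the quotient
    have hcentral : ∀ z ∈ N k, ∀ q : G ⧸ N (k + 1), Commute (f z) q := by
      intro z hz q
      obtain ⟨w, rfl⟩ := hsurj q
      have hmem : ⁅z, w⁆ ∈ N (k + 1) := by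
        rw [hLdef]
        exact Subgroup.commutator_mem_commutator hz (Subgroup.mem_top w)
      have h1 : f ⁅z, w⁆ = 1 := hone _ hmem
      rw [map_commutatorElement] at h1
      exact commutatorElement_eq_one_iff_commute.mp h1
    -- main claim: every element of N k has trivial p-th power in the quotient
    have hmain : ∀ x ∈ N k, (f x) ^ p = 1 := by
      have hclos : N k = Subgroup.closure
          {g | ∃ g₁ ∈ N (k - 1), ∃ g₂ ∈ (⊤ : Subgroup G), ⁅g₁, g₂⁆ = g} := by
        rw [hKdef, Subgroup.commutator_def]
      intro x hx
      rw [hclos] at hx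
      induction hx using Subgroup.closure_induction with
      | mem x hx =>
        obtain ⟨a, ha, g, -, rfl⟩ := hx
        have hag : ⁅a, g⁆ ∈ N k := by
          rw [hKdef]; exact Subgroup.commutator_mem_commutator ha (Subgroup.mem_top g)
        have hc : ∀ q : G ⧸ N (k + 1), Commute ⁅f a, f g⁆ q := by
          intro q
          rw [← map_commutatorElement]
          exact hcentral _ hag q
        have hstep : ⁅(f a) ^ p, f g⁆ = ⁅f a, f g⁆ ^ p :=
          commutator_pow_left_of_central (f a) (f g) hc p
        have hap : ⁅a ^ p, g⁆ ∈ N (k + 1) := by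
          rw [hLdef]
          exact Subgroup.commutator_mem_commutator (hexp a ha) (Subgroup.mem_top g)
        calc (f ⁅a, g⁆) ^ p = ⁅f a, f g⁆ ^ p := by rw [map_commutatorElement]
          _ = ⁅(f a) ^ p, f g⁆ := hstep.symm
          _ = ⁅f (a ^ p), f g⁆ := by rw [map_pow]
          _ = f ⁅a ^ p, g⁆ := (map_commutatorElement f _ _).symm
          _ = 1 := hone _ hap
      | one => simp
      | mul x y hx hy ihx ihy =>
        have hxK : x ∈ N k := by rw [hclos]; exact hx
        have hcomm : Commute (f x) (f y) := hcentral x hxK (f y)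
        rw [map_mul, hcomm.mul_pow, ihx, ihy, one_mul]
      | inv x hx ihx =>
        rw [map_inv, inv_pow, ihx, inv_one]
    intro x hx
    have := hmain x hx
    rw [← map_pow] at this
    exact (QuotientGroup.eq_one_iff _).mp this
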